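/- For any two Hermitian operators A and B on (ℂ²)^{⊗N}, |2^{-N} tr([A, B]²)| ≤ 4 ‖B‖² (A | P_j A), provided B is supported only on qubit j (i.e., B = B_j ⊗ 1 on the other qubits). In particular, for B a Pauli matrix on site j with ‖B‖ = 1, |2^{-N} tr([A,B]²)| ≤ 4 (A|P_j A). -/

import Mathlib

open Matrix BigOperators

abbrev QOp (N : ℕ) := Matrix (Fin N → Fin 2) (Fin N → Fin 2) ℂ

noncomputable def pauli : Fin 4 → Matrix (Fin 2) (Fin 2) ℂ
  | 0 => 1
  | 1 => !![0, 1; 1, 0]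
  | 2 => !![0, -Complex.I; Complex.I, 0]
  | 3 => !![1, 0; 0, -1]

noncomputable def pauliString {N : ℕ} (σ : Fin N → Fin 4) : QOp N :=
  fun f g => ∏ i, pauli (σ i) (f i) (g i)

noncomputable def ip {N : ℕ} (A B : QOp N) : ℂ :=
  (2 : ℂ)⁻¹ ^ N * (Aᴴ * B).trace

noncomputable def idTr {N : ℕ} (i : Fin N) (O : QOp N) : QOp N :=
  fun f g => (if f i = g i then 1 else 0) *
    ∑ b : Fin 2, O (Function.update f i b) (Function.update g i b)

noncomputable def Pj {N : ℕ} (i : Fin N) (O : QOp N) : QOp N :=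
  O - (2 : ℂ)⁻¹ • idTr i O

noncomputable def singleSite {N : ℕ} (i : Fin N) (b : Matrix (Fin 2) (Fin 2) ℂ) : QOp N :=
  fun f g => b (f i) (g i) * ∏ k ∈ Finset.univ.erase i, (if f k = g k then (1:ℂ) else 0)

noncomputable def pauliAt {N : ℕ} (i : Fin N) (A : Fin 3) : QOp N :=
  singleSite i (pauli A.succ)

noncomputable def opNorm {n : Type*} [Fintype n] [DecidableEq n] (A : Matrix n n ℂ) : ℝ :=
  ‖(Matrix.toEuclideanCLM (𝕜 := ℂ) A : EuclideanSpace ℂ n →L[ℂ] EuclideanSpace ℂ n)‖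

attribute [local instance] Matrix.linftyOpNormedRing Matrix.linftyOpNormedAlgebra

noncomputable def mexp {n : Type*} [Fintype n] [DecidableEq n] (A : Matrix n n ℂ) : Matrix n n ℂ :=
  NormedSpace.exp A

set_option linter.unusedSectionVars false

section Frob
variable {n : Type*} [Fintype n] [DecidableEq n]

noncomputable def fnorm (X : Matrix n n ℂ) : ℝ :=
  ‖(WithLp.equiv 2 ((n × n) → ℂ)).symm (fun p => X p.1 p.2)‖

lemma fnorm_eq (X : Matrix n n ℂ) :
    fnorm X = Real.sqrt (∑ f : n, ∑ g : n, ‖X f g‖ ^ 2) := by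
  rw [fnorm, EuclideanSpace.norm_eq, ← Finset.sum_product']
  simp [Finset.univ_product_univ]

lemma fnorm_nonneg (X : Matrix n n ℂ) : 0 ≤ fnorm X := norm_nonneg _

lemma fnorm_sq (X : Matrix n n ℂ) :
    fnorm X ^ 2 = ∑ f : n, ∑ g : n, ‖X f g‖ ^ 2 := by
  rw [fnorm_eq, Real.sq_sqrt]
  positivity

lemma fnorm_sub_le (X Y : Matrix n n ℂ) : fnorm (X - Y) ≤ fnorm X + fnorm Y := by
  have : (WithLp.equiv 2 ((n × n) → ℂ)).symm (fun p => (X - Y) p.1 p.2)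
      = (WithLp.equiv 2 ((n × n) → ℂ)).symm (fun p => X p.1 p.2)
        - (WithLp.equiv 2 ((n × n) → ℂ)).symm (fun p => Y p.1 p.2) := by
    rfl
  rw [fnorm, this]
  exact norm_sub_le _ _

lemma fnorm_conjTranspose (X : Matrix n n ℂ) : fnorm Xᴴ = fnorm X := by
  rw [fnorm_eq, fnorm_eq, Finset.sum_comm]
  simp [conjTranspose_apply]

lemma fnorm_mul_le_left (B X : Matrix n n ℂ) : fnorm (B * X) ≤ opNorm B * fnorm X := by
  have h1 : fnorm (B * X) ^ 2 ≤ (opNorm B * fnorm X) ^ 2 := by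
    rw [fnorm_sq, mul_pow, fnorm_sq]
    rw [Finset.sum_comm (f := fun f g => ‖(B * X) f g‖ ^ 2),
      Finset.sum_comm (f := fun f g => ‖X f g‖ ^ 2), Finset.mul_sum]
    refine Finset.sum_le_sum fun g _ => ?_
    have key : ∑ f : n, ‖(B * X) f g‖ ^ 2
        = ‖(Matrix.toEuclideanCLM (𝕜 := ℂ) B) ((WithLp.equiv 2 (n → ℂ)).symm (fun f => X f g))‖ ^ 2 := by
      rw [WithLp.equiv_symm_apply, Matrix.toEuclideanCLM_toLp, EuclideanSpace.norm_eq, Real.sq_sqrt (by positivity)]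
      refine Finset.sum_congr rfl fun f _ => ?_
      have : (WithLp.toLp 2 (B *ᵥ fun f => X f g)) f
          = (B * X) f g := by
        simp [Matrix.toLin'_apply, Matrix.mulVec, Matrix.mul_apply, dotProduct]
      rw [this]
    rw [key]
    have h2 := (Matrix.toEuclideanCLM (𝕜 := ℂ) B).le_opNorm
      ((WithLp.equiv 2 (n → ℂ)).symm (fun f => X f g))
    have h3 : ‖(WithLp.equiv 2 (n → ℂ)).symm (fun f => X f g)‖ ^ 2 = ∑ f : n, ‖X f g‖ ^ 2 := by
      rw [EuclideanSpace.norm_eq, Real.sq_sqrt (by positivity)]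
      rfl
    calc ‖(Matrix.toEuclideanCLM (𝕜 := ℂ) B) ((WithLp.equiv 2 (n → ℂ)).symm (fun f => X f g))‖ ^ 2
        ≤ (opNorm B * ‖(WithLp.equiv 2 (n → ℂ)).symm (fun f => X f g)‖) ^ 2 := by
          apply pow_le_pow_left₀ (norm_nonneg _) h2
      _ = opNorm B ^ 2 * ∑ f : n, ‖X f g‖ ^ 2 := by rw [mul_pow, h3]
  have hb : 0 ≤ opNorm B * fnorm X := mul_nonneg (norm_nonneg _) (fnorm_nonneg _)
  nlinarith [fnorm_nonneg (B * X)]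

lemma opNorm_conjTranspose (B : Matrix n n ℂ) : opNorm Bᴴ = opNorm B := by
  unfold opNorm
  rw [show Bᴴ = star B from rfl, map_star, ContinuousLinearMap.star_eq_adjoint]
  exact ContinuousLinearMap.adjoint.norm_map _

lemma fnorm_mul_le_right (B X : Matrix n n ℂ) : fnorm (X * B) ≤ opNorm B * fnorm X := by
  have : fnorm (X * B) = fnorm (Bᴴ * Xᴴ) := by rw [← fnorm_conjTranspose (X * B), conjTranspose_mul]
  rw [this]
  calc fnorm (Bᴴ * Xᴴ) ≤ opNorm Bᴴ * fnorm Xᴴ := fnorm_mul_le_left _ _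
    _ = opNorm B * fnorm X := by rw [opNorm_conjTranspose, fnorm_conjTranspose]

lemma trace_conjTranspose_mul_self (X : Matrix n n ℂ) :
    (Xᴴ * X).trace = ((fnorm X ^ 2 : ℝ) : ℂ) := by
  rw [fnorm_sq]
  push_cast
  rw [Matrix.trace, Finset.sum_comm]
  simp only [Matrix.diag_apply, Matrix.mul_apply, conjTranspose_apply]
  refine Finset.sum_congr rfl fun f _ => Finset.sum_congr rfl fun g _ => ?_
  rw [mul_comm, show star (X g f) = (starRingEnd ℂ) (X g f) from rfl, Complex.mul_conj]
  rw [Complex.normSq_eq_norm_sq]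
  norm_cast


section Comb
variable {N : ℕ} (j : Fin N)

noncomputable def sumUpd (X : QOp N) (f g : Fin N → Fin 2) : ℂ :=
  ∑ c : Fin 2, X (Function.update f j c) (Function.update g j c)

lemma sumUpd_update (X : QOp N) (f g : Fin N → Fin 2) (c c' : Fin 2) :
    sumUpd j X (Function.update f j c) (Function.update g j c') = sumUpd j X f g := by
  simp [sumUpd, Function.update_idem]

lemma idTr_apply (X : QOp N) (f g : Fin N → Fin 2) :
    idTr j X f g = (if f j = g j then 1 else 0) * sumUpd j X f g := rfl

lemma idTr_mul_singleSite (X : QOp N) (b : Matrix (Fin 2) (Fin 2) ℂ) :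
    idTr j X * singleSite j b = fun f g => b (f j) (g j) * sumUpd j X f g := by
  ext f g
  rw [Matrix.mul_apply]
  rw [Finset.sum_eq_single (Function.update g j (f j))]
  · have h1 : ∀ k ∈ Finset.univ.erase j,
        (if Function.update g j (f j) k = g k then (1:ℂ) else 0) = 1 := by
      intro k hk
      rw [Function.update_of_ne (Finset.mem_erase.mp hk).1, if_pos rfl]
    rw [idTr_apply, singleSite, Finset.prod_congr rfl h1, Finset.prod_const_one]
    simp only [Function.update_self, if_pos rfl]
    have h2 : sumUpd j X f (Function.update g j (f j)) = sumUpd j X f g := by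
      have := sumUpd_update j X f g (f j) (f j)
      calc sumUpd j X f (Function.update g j (f j))
          = sumUpd j X (Function.update f j (f j)) (Function.update g j (f j)) := by
            rw [Function.update_eq_self]
        _ = sumUpd j X f g := sumUpd_update j X f g _ _
    rw [h2]; simp only [if_true]; ring
  · intro h _ hne
    by_cases hj : f j = h j
    · have : ∃ k, k ≠ j ∧ h k ≠ g k := by
        by_contra hc
        push_neg at hc
        apply hne
        funext k
        by_cases hkj : k = j
        · subst hkj; rw [Function.update_self, ← hj]
        · rw [Function.update_of_ne hkj]; exact hc k hkj
      obtain ⟨k, hkj, hkg⟩ := this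
      have : (∏ k ∈ Finset.univ.erase j, (if h k = g k then (1:ℂ) else 0)) = 0 :=
        Finset.prod_eq_zero (Finset.mem_erase.mpr ⟨hkj, Finset.mem_univ k⟩) (if_neg hkg)
      rw [singleSite]
      rw [this, mul_zero, mul_zero]
    · rw [idTr_apply, if_neg hj, zero_mul, zero_mul]
  · intro h; exact absurd (Finset.mem_univ _) h

lemma singleSite_mul_idTr (X : QOp N) (b : Matrix (Fin 2) (Fin 2) ℂ) :
    singleSite j b * idTr j X = fun f g => b (f j) (g j) * sumUpd j X f g := by
  ext f g
  rw [Matrix.mul_apply]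
  rw [Finset.sum_eq_single (Function.update f j (g j))]
  · have h1 : ∀ k ∈ Finset.univ.erase j,
        (if f k = Function.update f j (g j) k then (1:ℂ) else 0) = 1 := by
      intro k hk
      rw [Function.update_of_ne (Finset.mem_erase.mp hk).1, if_pos rfl]
    rw [idTr_apply, singleSite, Finset.prod_congr rfl h1, Finset.prod_const_one]
    simp only [Function.update_self, if_pos rfl]
    have h2 : sumUpd j X (Function.update f j (g j)) g = sumUpd j X f g := by
      calc sumUpd j X (Function.update f j (g j)) g
          = sumUpd j X (Function.update f j (g j)) (Function.update g j (g j)) := by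
            rw [Function.update_eq_self]
        _ = sumUpd j X f g := sumUpd_update j X f g _ _
    rw [h2]; simp only [if_true]; ring
  · intro h _ hne
    by_cases hj : h j = g j
    · have : ∃ k, k ≠ j ∧ f k ≠ h k := by
        by_contra hc
        push_neg at hc
        apply hne
        funext k
        by_cases hkj : k = j
        · subst hkj; rw [Function.update_self, hj]
        · rw [Function.update_of_ne hkj]; exact (hc k hkj).symm
      obtain ⟨k, hkj, hkg⟩ := this
      have : (∏ k ∈ Finset.univ.erase j, (if f k = h k then (1:ℂ) else 0)) = 0 :=
        Finset.prod_eq_zero (Finset.mem_erase.mpr ⟨hkj, Finset.mem_univ k⟩) (if_neg hkg)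
      rw [singleSite]
      rw [this, mul_zero, zero_mul]
    · rw [idTr_apply, if_neg hj, zero_mul, mul_zero]
  · intro h; exact absurd (Finset.mem_univ _) h

lemma idTr_commute (X : QOp N) (b : Matrix (Fin 2) (Fin 2) ℂ) :
    idTr j X * singleSite j b = singleSite j b * idTr j X := by
  rw [idTr_mul_singleSite, singleSite_mul_idTr]

end Comb

section Key
variable {N : ℕ} (j : Fin N)

lemma trace_conjTranspose_mul' (X Y : QOp N) :
    (Xᴴ * Y).trace = ∑ f : Fin N → Fin 2, ∑ g : Fin N → Fin 2, star (X f g) * Y f g := by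
  rw [Matrix.trace]
  simp only [Matrix.diag_apply, Matrix.mul_apply, conjTranspose_apply]
  exact Finset.sum_comm

lemma star_idTr_apply (X : QOp N) (f g : Fin N → Fin 2) :
    star (idTr j X f g) = (if f j = g j then (1:ℂ) else 0) * star (sumUpd j X f g) := by
  by_cases h : f j = g j <;> simp [idTr_apply, h]

private noncomputable def Fterm (X : QOp N)
    (p : ((Fin N → Fin 2) × (Fin N → Fin 2)) × Fin 2) : ℂ :=
  star (sumUpd j X p.1.1 p.1.2) *
    X (Function.update p.1.1 j p.2) (Function.update p.1.2 j p.2)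

private noncomputable def Gterm (X : QOp N)
    (p : ((Fin N → Fin 2) × (Fin N → Fin 2)) × Fin 2) : ℂ :=
  star (sumUpd j X p.1.1 p.1.2) * X p.1.1 p.1.2

private noncomputable def dset : Finset (((Fin N → Fin 2) × (Fin N → Fin 2)) × Fin 2) :=
  (Finset.univ.filter (fun q : (Fin N → Fin 2) × (Fin N → Fin 2) => q.1 j = q.2 j)) ×ˢ
    Finset.univ

lemma idTr_trace_key (X : QOp N) :
    ((idTr j X)ᴴ * (idTr j X)).trace = 2 * ((idTr j X)ᴴ * X).trace := by
  classical
  have hA : ((idTr j X)ᴴ * (idTr j X)).trace = ∑ p ∈ dset j, Fterm j X p := by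
    rw [trace_conjTranspose_mul']
    rw [← Fintype.sum_prod_type
      (f := fun q : (Fin N → Fin 2) × (Fin N → Fin 2) => star (idTr j X q.1 q.2) * idTr j X q.1 q.2)]
    rw [dset, Finset.sum_product, Finset.sum_filter]
    refine Finset.sum_congr rfl fun q _ => ?_
    rw [star_idTr_apply, idTr_apply]
    by_cases h : q.1 j = q.2 j
    · rw [if_pos h, if_pos h, one_mul, one_mul]
      unfold Fterm
      simp only [sumUpd, Finset.mul_sum]
    · rw [if_neg h, if_neg h, zero_mul, zero_mul]
  have inner : ∀ q : (Fin N → Fin 2) × (Fin N → Fin 2),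
      (∑ c : Fin 2, Gterm j X (q, c)) = 2 * (star (sumUpd j X q.1 q.2) * X q.1 q.2) := by
    intro q
    simp [Gterm, Finset.sum_const, two_mul]
  have hB : 2 * ((idTr j X)ᴴ * X).trace = ∑ p ∈ dset j, Gterm j X p := by
    rw [dset, Finset.sum_product, Finset.sum_congr rfl fun q _ => inner q, ← Finset.mul_sum,
      Finset.sum_filter, trace_conjTranspose_mul',
      ← Fintype.sum_prod_type
      (f := fun q : (Fin N → Fin 2) × (Fin N → Fin 2) => star (idTr j X q.1 q.2) * X q.1 q.2)]
    congr 1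
    refine Finset.sum_congr rfl fun q _ => ?_
    rw [star_idTr_apply]
    by_cases h : q.1 j = q.2 j
    · rw [if_pos h, if_pos h, one_mul]
    · rw [if_neg h, if_neg h, zero_mul, zero_mul]
  rw [hA, hB]
  refine Finset.sum_nbij'
    (i := fun p => ((Function.update p.1.1 j p.2, Function.update p.1.2 j p.2), p.1.1 j))
    (j := fun p => ((Function.update p.1.1 j p.2, Function.update p.1.2 j p.2), p.1.1 j))
    ?_ ?_ ?_ ?_ ?_
  · intro p _
    simp [dset, Function.update_self]
  · intro p _
    simp [dset, Function.update_self]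
  · intro p hp
    simp only [dset, Finset.mem_product, Finset.mem_filter, Finset.mem_univ, true_and,
      and_true] at hp
    obtain ⟨⟨f, g⟩, c⟩ := p
    simp only at hp ⊢
    rw [Function.update_idem, Function.update_idem, Function.update_self]
    rw [Function.update_eq_self, hp, Function.update_eq_self]
  · intro p hp
    simp only [dset, Finset.mem_product, Finset.mem_filter, Finset.mem_univ, true_and,
      and_true] at hp
    obtain ⟨⟨f, g⟩, c⟩ := p
    simp only at hp ⊢
    rw [Function.update_idem, Function.update_idem, Function.update_self]
    rw [Function.update_eq_self, hp, Function.update_eq_self]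
  · intro p _
    obtain ⟨⟨f, g⟩, c⟩ := p
    unfold Fterm Gterm
    simp only
    rw [sumUpd_update]

lemma trace_Pj (A : QOp N) :
    (Aᴴ * Pj j A).trace = ((Pj j A)ᴴ * (Pj j A)).trace := by
  have key := idTr_trace_key j A
  have hstar : star ((2:ℂ)⁻¹) = (2:ℂ)⁻¹ := by simp
  have hTP : ((idTr j A)ᴴ * Pj j A).trace = 0 := by
    rw [Pj, mul_sub, Matrix.mul_smul, trace_sub, trace_smul, key]
    simp
  have hP : (Pj j A)ᴴ = Aᴴ - (2:ℂ)⁻¹ • (idTr j A)ᴴ := by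
    rw [Pj, conjTranspose_sub, conjTranspose_smul, hstar]
  rw [hP, sub_mul, trace_sub, Matrix.smul_mul, trace_smul, hTP, smul_zero, sub_zero]

end Key


/-- OTOC bound. If B is supported only on qubit j, then
|2^{-N} tr([A,B]²)| ≤ 4 ‖B‖² (A|P_j A). -/
theorem otoc_bound {N : ℕ} (j : Fin N) (A B : QOp N)
    (hA : A.IsHermitian) (hB : B.IsHermitian)
    (b : Matrix (Fin 2) (Fin 2) ℂ) (hsupp : B = singleSite j b) :
    ‖(2 : ℂ)⁻¹ ^ N * (((A * B - B * A) * (A * B - B * A)).trace)‖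
      ≤ 4 * opNorm B ^ 2 * (ip A (Pj j A)).re := by
  classical
  set P := Pj j A with hP
  set C := A * B - B * A with hC
  have hcomm : idTr j A * B = B * idTr j A := by rw [hsupp]; exact idTr_commute j A b
  have hCP : C = P * B - B * P := by
    rw [hC, hP, Pj, sub_mul, mul_sub, Matrix.smul_mul, Matrix.mul_smul, hcomm]
    abel
  have hCstar : Cᴴ = -C := by
    rw [hC, conjTranspose_sub, conjTranspose_mul, conjTranspose_mul, hA.eq, hB.eq]
    abel
  have htr : (C * C).trace = -(((fnorm C ^ 2 : ℝ) : ℂ)) := by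
    have h1 : C * C = -(Cᴴ * C) := by rw [hCstar, neg_mul, neg_neg]
    rw [h1, trace_neg, trace_conjTranspose_mul_self]
  -- LHS evaluation
  have hLHS : ‖(2 : ℂ)⁻¹ ^ N * ((C * C).trace)‖
      = (2⁻¹ : ℝ) ^ N * fnorm C ^ 2 := by
    rw [htr, norm_mul, norm_neg, norm_pow, norm_inv, Complex.norm_two, Complex.norm_real, Real.norm_eq_abs,
      abs_of_nonneg (by positivity)]
  -- RHS evaluation
  have hip : (ip A P).re = (2⁻¹ : ℝ) ^ N * fnorm P ^ 2 := by
    have h2 : (Aᴴ * P).trace = ((fnorm P ^ 2 : ℝ) : ℂ) := by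
      rw [hP, trace_Pj, trace_conjTranspose_mul_self]
    rw [ip, h2, show (2 : ℂ)⁻¹ ^ N * (((fnorm P ^ 2 : ℝ) : ℂ))
      = (((2⁻¹ : ℝ) ^ N * fnorm P ^ 2 : ℝ) : ℂ) by push_cast; ring, Complex.ofReal_re]
  have hbound : fnorm C ≤ 2 * opNorm B * fnorm P := by
    calc fnorm C = fnorm (P * B - B * P) := by rw [← hCP]
      _ ≤ fnorm (P * B) + fnorm (B * P) := fnorm_sub_le _ _
      _ ≤ opNorm B * fnorm P + opNorm B * fnorm P :=
          add_le_add (fnorm_mul_le_right _ _) (fnorm_mul_le_left _ _)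
      _ = 2 * opNorm B * fnorm P := by ring
  rw [hLHS, hip]
  have h0 : (0:ℝ) ≤ (2⁻¹ : ℝ) ^ N := by positivity
  have h1 : fnorm C ^ 2 ≤ (2 * opNorm B * fnorm P) ^ 2 :=
    pow_le_pow_left₀ (fnorm_nonneg _) hbound 2
  nlinarith [fnorm_nonneg C, fnorm_nonneg P, norm_nonneg (Matrix.toEuclideanCLM (𝕜 := ℂ) B),
    mul_le_mul_of_nonneg_left h1 h0]
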